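/- Fix A > 0, a < b, λ = π/(b-a), constants ε ∈ (0, π) and c > Aλπ + λ². Then the function φ(x,t) = ε·e^{-ct}·sin(λ(x-a)) satisfies φ_t - cos²(φ)·φ_xx - A·sin(φ)·φ_x ≤ 0 for all x ∈ [a,b] and t ≥ 0. -/

import Mathlib

set_option maxHeartbeats 1000000

theorem stmt_6 (A a b ε c lam : ℝ) (hA : 0 < A) (hab : a < b)
    (hlam : lam = Real.pi / (b - a))
    (hε : 0 < ε) (hεπ : ε < Real.pi)
    (hc : A * lam * Real.pi + lam ^ 2 < c)
    (φ : ℝ → ℝ → ℝ)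
    (hφ : φ = fun x t => ε * Real.exp (-c * t) * Real.sin (lam * (x - a))) :
    ∀ x ∈ Set.Icc a b, ∀ t : ℝ, 0 ≤ t →
      deriv (fun s => φ x s) t
        - (Real.cos (φ x t)) ^ 2 * deriv (fun y => deriv (fun z => φ z t) y) x
        - A * Real.sin (φ x t) * deriv (fun y => φ y t) x ≤ 0 := by
  subst hφ
  intro x hx t ht
  obtain ⟨hxa, hxb⟩ := hx
  have hba : (0:ℝ) < b - a := by linarith
  have hlam0 : 0 < lam := by rw [hlam]; positivity
  set E := ε * Real.exp (-c * t) with hE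
  set s := Real.sin (lam * (x - a)) with hs
  set co := Real.cos (lam * (x - a)) with hco
  -- time derivative
  have ht1 : HasDerivAt (fun u : ℝ => ε * Real.exp (-c * u) * s)
      (ε * (-c * Real.exp (-c * t)) * s) t := by
    have h0 : HasDerivAt (fun u : ℝ => -c * u) (-c) t := by
      simpa using (hasDerivAt_id t).const_mul (-c)
    have := ((h0.exp).const_mul ε).mul_const s
    simpa [mul_comm] using this
  -- space derivative (at any point y)
  have hx1 : ∀ y : ℝ, HasDerivAt (fun z : ℝ => ε * Real.exp (-c * t) * Real.sin (lam * (z - a)))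
      (E * (Real.cos (lam * (y - a)) * lam)) y := by
    intro y
    have h0 : HasDerivAt (fun z : ℝ => lam * (z - a)) lam y := by
      simpa using ((hasDerivAt_id y).sub_const a).const_mul lam
    simpa [hE, mul_comm] using (h0.sin).const_mul E
  have hdx : deriv (fun y => ε * Real.exp (-c * t) * Real.sin (lam * (y - a))) x
      = E * (co * lam) := (hx1 x).deriv
  have hdxfun : (fun y => deriv (fun z => ε * Real.exp (-c * t) * Real.sin (lam * (z - a))) y)
      = fun y => E * (Real.cos (lam * (y - a)) * lam) := by
    funext y; exact (hx1 y).deriv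
  have hx2 : HasDerivAt (fun y : ℝ => E * (Real.cos (lam * (y - a)) * lam))
      (E * (-s * lam * lam)) x := by
    have h0 : HasDerivAt (fun z : ℝ => lam * (z - a)) lam x := by
      simpa using ((hasDerivAt_id x).sub_const a).const_mul lam
    have := ((h0.cos).mul_const lam).const_mul E
    simpa [hs, mul_comm, mul_assoc, mul_left_comm] using this
  have hdxx : deriv (fun y => deriv (fun z => ε * Real.exp (-c * t) * Real.sin (lam * (z - a))) y) x
      = E * (-s * lam * lam) := by rw [hdxfun]; exact hx2.deriv
  have hdt : deriv (fun u => ε * Real.exp (-c * u) * s) t = ε * (-c * Real.exp (-c * t)) * s :=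
    ht1.deriv
  have hdt' : deriv (fun u => ε * Real.exp (-c * u) * Real.sin (lam * (x - a))) t = ε * (-c * Real.exp (-c * t)) * s :=
    ht1.deriv
  simp only [hdt, hdt', hdxx, hdx]
  -- now pure inequality
  have hE0 : 0 < E := by positivity
  have hc0 : 0 < c := by nlinarith [mul_pos (mul_pos hA hlam0) Real.pi_pos, sq_nonneg lam]
  have hEε : E ≤ ε := by
    have : Real.exp (-c * t) ≤ 1 := by
      apply Real.exp_le_one_iff.mpr
      nlinarith
    nlinarith
  have harg0 : 0 ≤ lam * (x - a) := by nlinarith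
  have hargπ : lam * (x - a) ≤ Real.pi := by
    have : lam * (b - a) = Real.pi := by rw [hlam]; field_simp
    nlinarith
  have hs0 : 0 ≤ s := Real.sin_nonneg_of_nonneg_of_le_pi harg0 hargπ
  have hs1 : s ≤ 1 := Real.sin_le_one _
  have hEs0 : 0 ≤ E * s := by positivity
  have hsin_le : Real.sin (E * s) ≤ E * s := Real.sin_le hEs0
  have hsin0 : 0 ≤ Real.sin (E * s) := by
    apply Real.sin_nonneg_of_nonneg_of_le_pi hEs0
    nlinarith [Real.pi_pos]
  have hcos2 : (Real.cos (E * s)) ^ 2 ≤ 1 := by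
    nlinarith [Real.neg_one_le_cos (E * s), Real.cos_le_one (E * s)]
  have hco1 : co ≤ 1 := Real.cos_le_one _
  have hco2 : -1 ≤ co := Real.neg_one_le_cos _
  have hπ : 0 < Real.pi := Real.pi_pos
  have hεE : E < Real.pi := lt_of_le_of_lt hEε hεπ
  have hfold : ε * (-c * Real.exp (-c * t)) * s = -c * (E * s) := by rw [hE]; ring
  rw [hfold]
  set S := Real.sin (ε * Real.exp (-c * t) * Real.sin (lam * (x - a))) with hS
  set C := Real.cos (ε * Real.exp (-c * t) * Real.sin (lam * (x - a))) with hC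
  have hSle : S ≤ E * s := hsin_le
  have hS0 : 0 ≤ S := hsin0
  have hC2 : C ^ 2 ≤ 1 := hcos2
  have hC20 : 0 ≤ C ^ 2 := sq_nonneg C
  set P := E * s with hP
  have hP0 : 0 ≤ P := hEs0
  have e1 : E * (-s * lam * lam) = -(P * lam ^ 2) := by rw [hP]; ring
  have e2 : A * S * (E * (co * lam)) = A * S * E * lam * co := by ring
  rw [e1, e2]
  nlinarith [mul_nonneg (mul_nonneg (mul_nonneg (mul_nonneg hA.le hS0) hE0.le) hlam0.le) (by linarith : (0:ℝ) ≤ 1 + co),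
    mul_nonneg (mul_nonneg (mul_nonneg hA.le hE0.le) hlam0.le) (by linarith : (0:ℝ) ≤ P - S),
    mul_nonneg (mul_nonneg (mul_nonneg hA.le hP0) hlam0.le) (by linarith : (0:ℝ) ≤ Real.pi - E),
    mul_nonneg (mul_nonneg hP0 (sq_nonneg lam)) (by linarith : (0:ℝ) ≤ 1 - C ^ 2),
    mul_nonneg hP0 (by linarith : (0:ℝ) ≤ c - A * lam * Real.pi - lam ^ 2)]
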